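/- For 1 ≤ i ≤ r, the i-th polar quotient (1/n)·Σ_{k=1}^{i-1}(e_{k-1} − e_k)m_k + m_i is strictly increasing in i; i.e., the sequence Q_i = (1/n)Σ_{k=1}^{i-1}(e_{k-1}−e_k)m_k + m_i satisfies Q_1 < Q_2 < ... < Q_r. -/

import Mathlib

/-- The polar quotients `Q i = (1/n) * ∑_{k=1}^{i-1} (e (k-1) - e k) * m k + m i`
are strictly increasing in `i` for `1 ≤ i ≤ r`. -/
theorem stmt5 (r n : ℕ) (m e : ℕ → ℕ) (hr : 1 ≤ r) (hn : 0 < n)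
    (hm1 : 0 < m 1)
    (hmono : ∀ i, 1 ≤ i → i < r → m i < m (i + 1))
    (he0 : e 0 = n)
    (hgcd : ∀ k, 1 ≤ k → k ≤ r → e k = Nat.gcd (e (k - 1)) (m k))
    (her : e r = 1) :
    ∀ i, 1 ≤ i → i < r →
      (∑ k ∈ Finset.Icc 1 (i - 1), ((e (k - 1) : ℚ) - (e k : ℚ)) * (m k : ℚ)) / (n : ℚ)
          + (m i : ℚ)
        < (∑ k ∈ Finset.Icc 1 i, ((e (k - 1) : ℚ) - (e k : ℚ)) * (m k : ℚ)) / (n : ℚ)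
          + (m (i + 1) : ℚ) := by
  have hepos : ∀ k, k ≤ r → 0 < e k := by
    intro k
    induction k with
    | zero => intro _; simpa [he0] using hn
    | succ j ih =>
      intro hjr
      rw [hgcd (j + 1) (by omega) hjr]
      simp only [Nat.add_sub_cancel]
      exact Nat.gcd_pos_of_pos_left _ (ih (by omega))
  intro i hi1 hir
  obtain ⟨j, rfl⟩ : ∃ j, i = j + 1 := ⟨i - 1, by omega⟩
  have hle : e (j + 1) ≤ e j := by
    rw [hgcd (j + 1) (by omega) (by omega)]
    simpa using Nat.gcd_le_left (m (j + 1)) (hepos j (by omega))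
  rw [Finset.sum_Icc_succ_top (by omega : 1 ≤ j + 1)]
  simp only [Nat.add_sub_cancel]
  have hT : (0 : ℚ) ≤ ((e j : ℚ) - (e (j + 1) : ℚ)) * (m (j + 1) : ℚ) := by
    apply mul_nonneg
    · have := (Nat.cast_le (α := ℚ)).mpr hle; linarith
    · positivity
  have hM : (m (j + 1) : ℚ) < (m (j + 1 + 1) : ℚ) := by
    exact_mod_cast hmono (j + 1) (by omega) hir
  rw [add_div]
  have hTn : (0 : ℚ) ≤ ((e j : ℚ) - (e (j + 1) : ℚ)) * (m (j + 1) : ℚ) / n := by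
    apply div_nonneg hT (by positivity)
  linarith
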